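/- Let p be an irreducible stochastic matrix on a finite state space X with stationary distribution ρ. For r ∈ X, the reduced matrix _r p on X \ {r} given by _r p_{ij} = p_{ij} + p_{ir} p_{rj}/(1 - p_{rr}) has stationary distribution _r ρ_i = ρ_i / (Σ_{j ≠ r} ρ_j), i.e., the restriction of ρ to X \ {r}, renormalized. -/
import Mathlib


/-- Irreducibility of a stochastic matrix on a finite state space. -/
def MatIrreducible {X : Type*} [Fintype X] [DecidableEq X] (p : Matrix X X ℝ) : Prop :=
  ∀ i j : X, ∃ n : ℕ, 0 < n ∧ 0 < (p ^ n) i j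

lemma subtype_sum_eq {X : Type*} [Fintype X] [DecidableEq X] (r : X) (f : X → ℝ) :
    ∑ i : {i : X // i ≠ r}, f i.1 = (∑ i, f i) - f r := by
  have h : ∑ i : {i : X // i ≠ r}, f i.1 = ∑ i ∈ Finset.univ.filter (· ≠ r), f i := by
    rw [← Finset.sum_subtype (Finset.univ.filter (· ≠ r)) (by simp) f]
  rw [h, Finset.filter_ne', eq_sub_iff_add_eq,
    Finset.sum_erase_add _ _ (Finset.mem_univ r)]

/-- The stationary distribution of the reduced matrix
`_r p_{ij} = p_{ij} + p_{ir} p_{rj}/(1 - p_{rr})` on `X \ {r}` is the restriction of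
the stationary distribution `ρ` of `p` to `X \ {r}`, renormalized. -/
theorem reduced_matrix_stationary {X : Type*} [Fintype X] [DecidableEq X]
    (hcard : 2 ≤ Fintype.card X)
    (p : X → X → ℝ) (hnn : ∀ i j, 0 ≤ p i j) (hrow : ∀ i, ∑ j, p i j = 1)
    (hirr : MatIrreducible (Matrix.of p)) (r : X) (hr : p r r < 1)
    (ρ : X → ℝ) (hρpos : ∀ i, 0 < ρ i) (hρsum : ∑ i, ρ i = 1)
    (hstat : ∀ j, ∑ i, ρ i * p i j = ρ j) :
    (∑ j : {i : X // i ≠ r}, ρ j.1 / (∑ j' : {i : X // i ≠ r}, ρ j'.1) = 1) ∧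
    ∀ j : {i : X // i ≠ r},
      ∑ i : {i : X // i ≠ r},
        (ρ i.1 / (∑ j' : {i : X // i ≠ r}, ρ j'.1)) *
          (p i.1 j.1 + p i.1 r * p r j.1 / (1 - p r r))
        = ρ j.1 / (∑ j' : {i : X // i ≠ r}, ρ j'.1) := by
  set S : ℝ := ∑ j' : {i : X // i ≠ r}, ρ j'.1 with hS
  obtain ⟨a, ha⟩ := Fintype.exists_ne_of_one_lt_card (by omega) r
  have hSpos : 0 < S := by
    apply Finset.sum_pos (fun i _ => hρpos i.1)
    exact ⟨⟨a, ha⟩, Finset.mem_univ _⟩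
  have hSne : S ≠ 0 := ne_of_gt hSpos
  have h1 : (1 : ℝ) - p r r ≠ 0 := by linarith
  constructor
  · rw [← Finset.sum_div, div_eq_one_iff_eq hSne]
  · intro j
    -- key sums
    have hstat' : ∑ i : {i : X // i ≠ r}, ρ i.1 * p i.1 j.1 = ρ j.1 - ρ r * p r j.1 := by
      rw [subtype_sum_eq r (fun i => ρ i * p i j.1), hstat j.1]
    have hcol : ∑ i : {i : X // i ≠ r}, ρ i.1 * p i.1 r = ρ r * (1 - p r r) := by
      rw [subtype_sum_eq r (fun i => ρ i * p i r), hstat r]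
      ring
    have key : ∑ i : {i : X // i ≠ r},
        ρ i.1 * (p i.1 j.1 + p i.1 r * p r j.1 / (1 - p r r)) = ρ j.1 := by
      have : ∀ i : {i : X // i ≠ r},
          ρ i.1 * (p i.1 j.1 + p i.1 r * p r j.1 / (1 - p r r))
          = ρ i.1 * p i.1 j.1 + (ρ i.1 * p i.1 r) * (p r j.1 / (1 - p r r)) := by
        intro i; ring
      rw [Finset.sum_congr rfl (fun i _ => this i), Finset.sum_add_distrib,
        ← Finset.sum_mul, hstat', hcol]
      field_simp
      ring
    calc ∑ i : {i : X // i ≠ r},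
          (ρ i.1 / S) * (p i.1 j.1 + p i.1 r * p r j.1 / (1 - p r r))
        = (∑ i : {i : X // i ≠ r},
            ρ i.1 * (p i.1 j.1 + p i.1 r * p r j.1 / (1 - p r r))) / S := by
          rw [Finset.sum_div]
          exact Finset.sum_congr rfl (fun i _ => by ring)
      _ = ρ j.1 / S := by rw [key]
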